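/- Let V be a vector space over a field K, let u = (u₁, …, u_m) be vectors in V generating a subspace U, and let β = (β₁, …, β_n) be functionals in V* generating a subspace B. Let β(u) ∈ K^{n×m} be the evaluation matrix with (i,j) entry β_i(u_j). If k¹, …, k^r ∈ K^m is a basis of the kernel of β(u), then U ∩ B⊥ is generated by the vectors Σ_{i=1}^m k¹_i u_i, …, Σ_{i=1}^m k^r_i u_i. -/

import Mathlib

theorem stmt_12 {K V : Type*} [Field K] [AddCommGroup V] [Module K V]
    {m n r : ℕ} (u : Fin m → V) (β : Fin n → Module.Dual K V)
    (M : Matrix (Fin n) (Fin m) K) (hM : ∀ i j, M i j = β i (u j))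
    (k : Fin r → (Fin m → K))
    (hkli : LinearIndependent K k)
    (hkspan : Submodule.span K (Set.range k) = LinearMap.ker M.mulVecLin) :
    Submodule.span K (Set.range u) ⊓
        (Submodule.span K (Set.range β)).dualCoannihilator =
      Submodule.span K (Set.range fun j : Fin r => ∑ i : Fin m, k j i • u i) := by
  set T : (Fin m → K) →ₗ[K] V := Fintype.linearCombination K u with hT
  have hrange : LinearMap.range T = Submodule.span K (Set.range u) :=
    Fintype.range_linearCombination K u
  have key : Submodule.span K (Set.range u) ⊓
      (Submodule.span K (Set.range β)).dualCoannihilator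
      = Submodule.map T (LinearMap.ker M.mulVecLin) := by
    ext v
    constructor
    · rintro ⟨hv1, hv2⟩
      rw [← hrange] at hv1
      obtain ⟨c, rfl⟩ := hv1
      refine ⟨c, ?_, rfl⟩
      simp only [SetLike.mem_coe, LinearMap.mem_ker]
      funext i
      have hβ : β i (T c) = 0 := by
        simp only [SetLike.mem_coe, Submodule.mem_dualCoannihilator] at hv2
        exact hv2 _ (Submodule.subset_span ⟨i, rfl⟩)
      simp only [hT, Fintype.linearCombination_apply, map_sum, map_smul] at hβ
      simp only [Matrix.mulVecLin_apply, Matrix.mulVec, dotProduct, hM,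
        Pi.zero_apply]
      rw [← hβ]
      exact Finset.sum_congr rfl fun j _ => mul_comm _ _
    · rintro ⟨c, hc, rfl⟩
      simp only [SetLike.mem_coe, LinearMap.mem_ker] at hc
      constructor
      · rw [← hrange]
        exact ⟨c, rfl⟩
      · simp only [SetLike.mem_coe, Submodule.mem_dualCoannihilator]
        intro φ hφ
        induction hφ using Submodule.span_induction with
        | mem x hx =>
          obtain ⟨i, rfl⟩ := hx
          have : M.mulVec c i = 0 := by rw [← Matrix.mulVecLin_apply, hc]; rfl
          simp only [Matrix.mulVec, dotProduct, hM] at this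
          simp only [hT, Fintype.linearCombination_apply, map_sum, map_smul,
            smul_eq_mul]
          rw [← this]
          exact Finset.sum_congr rfl fun j _ => mul_comm _ _
        | zero => simp
        | add x y _ _ hx hy => simp [hx, hy]
        | smul a x _ hx => simp [hx]
  rw [key, ← hkspan, Submodule.map_span, ← Set.range_comp]
  refine congrArg (Submodule.span K) (congrArg Set.range ?_)
  funext j
  simp [hT, Fintype.linearCombination_apply, Function.comp]
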